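/- Let μ be the normalized Lebesgue measure on [-π,π]^d, let Θ be a set with a distinguished point θ₀, and for each θ ∈ Θ and k ≥ 1 let f_{θ,k} : [-π,π]^d → (0,∞) be measurable with log f_{θ,k} integrable and satisfying the normalization ∫ log f_{θ,k} dμ = 0; assume f_{θ₀,k}/f_{θ,k} is μ-integrable for all θ, k, and assume the identifiability condition: for every θ ≠ θ₀ there exists k ≥ 1 such that the set {ω : f_{θ,k}(ω) ≠ f_{θ₀,k}(ω)} has positive μ-measure. Define W(θ) = sup_{k≥1} ∫ f_{θ₀,k}/f_{θ,k} dμ. Then W(θ₀) = 1, W(θ) > 1 for every θ ≠ θ₀, and hence inf_{θ∈Θ} W(θ) = 1 is attained only at θ = θ₀. -/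

import Mathlib

open MeasureTheory
open scoped ENNReal

/-- The normalized Lebesgue measure `(2π)^{-d} · Leb` on the cube `[-π,π]^d`
(a probability measure). -/
noncomputable def normCube (d : ℕ) : Measure (Fin d → ℝ) :=
  (ENNReal.ofReal ((2 * Real.pi) ^ d))⁻¹ •
    (volume.restrict (Set.Icc (fun _ => -Real.pi) (fun _ => Real.pi)))

lemma normCube_isProb (d : ℕ) : IsProbabilityMeasure (normCube d) := by
  constructor
  rw [normCube]
  have hv : volume (Set.Icc (fun _ : Fin d => -Real.pi) (fun _ => Real.pi))
      = ENNReal.ofReal ((2 * Real.pi) ^ d) := by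
    rw [Real.volume_Icc_pi]
    simp [ENNReal.ofReal_pow, two_mul, Real.pi_nonneg]
  rw [Measure.smul_apply, Measure.restrict_apply_univ, hv, smul_eq_mul]
  rw [ENNReal.inv_mul_cancel]
  · simp [Real.pi_pos.le, pow_eq_zero_iff]
    intro h; linarith [Real.pi_pos]
  · exact ENNReal.ofReal_ne_top

lemma jensen_key {α : Type*} [MeasurableSpace α] (μ : Measure α) [IsProbabilityMeasure μ]
    (g : α → ℝ) (hg : ∀ ω, 0 < g ω) (hgi : Integrable g μ)
    (hli : Integrable (fun ω => Real.log (g ω)) μ)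
    (hlz : ∫ ω, Real.log (g ω) ∂μ = 0) :
    1 ≤ ∫ ω, g ω ∂μ ∧ (0 < μ {ω | g ω ≠ 1} → 1 < ∫ ω, g ω ∂μ) := by
  set h : α → ℝ := fun ω => g ω - 1 - Real.log (g ω) with hh
  have hhi : Integrable h μ := (hgi.sub (integrable_const 1)).sub hli
  have hhnn : ∀ ω, 0 ≤ h ω := fun ω =>
    sub_nonneg.2 (Real.log_le_sub_one_of_pos (hg ω))
  have hint : ∫ ω, h ω ∂μ = (∫ ω, g ω ∂μ) - 1 := by
    rw [hh]
    simp only []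
    rw [integral_sub ((hgi.sub (integrable_const 1)).congr (by rfl)) hli, hlz,
      integral_sub hgi (integrable_const 1)]
    simp
  have hnn : 0 ≤ ∫ ω, h ω ∂μ := integral_nonneg hhnn
  constructor
  · linarith [hnn, hint.symm.le]
  · intro hpos
    by_contra hle
    push_neg at hle
    have h0 : ∫ ω, h ω ∂μ = 0 := le_antisymm (by linarith) hnn
    have : h =ᵐ[μ] 0 := (integral_eq_zero_iff_of_nonneg hhnn hhi).1 h0
    have hnull : μ {ω | h ω ≠ 0} = 0 := by
      rw [Filter.EventuallyEq, ae_iff] at this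
      simpa using this
    have hsub : {ω | g ω ≠ 1} ⊆ {ω | h ω ≠ 0} := by
      intro ω hω
      have := Real.add_one_le_exp (Real.log (g ω))
      have hlt : Real.log (g ω) < g ω - 1 := by
        rcases lt_or_gt_of_ne (hω : g ω ≠ 1) with h1 | h1
        · nlinarith [Real.log_lt_sub_one_of_pos (hg ω) hω]
        · nlinarith [Real.log_lt_sub_one_of_pos (hg ω) hω]
      simp only [Set.mem_setOf_eq, hh]
      intro hc
      nlinarith
    exact absurd (measure_mono_null hsub hnull) (by exact ne_of_gt hpos)

/-- Let `μ` be the normalized Lebesgue measure on `[-π,π]^d`, `Θ` a set with a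
distinguished point `θ₀`, and for each `θ ∈ Θ`, `k ≥ 1`, let `f_{θ,k} : [-π,π]^d → (0,∞)` be
measurable with `log f_{θ,k}` integrable and `∫ log f_{θ,k} dμ = 0`; assume `f_{θ₀,k}/f_{θ,k}`
is μ-integrable, and identifiability: for `θ ≠ θ₀` there is `k` with
`μ{ω : f_{θ,k}(ω) ≠ f_{θ₀,k}(ω)} > 0`. Define `W(θ) = sup_k ∫ f_{θ₀,k}/f_{θ,k} dμ`. Then
`W(θ₀) = 1`, `W(θ) > 1` for `θ ≠ θ₀`, and `inf_θ W(θ) = 1` is attained only at `θ₀`. -/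
theorem whittle_functional_identifiability {Θ : Type*} (d : ℕ) (θ₀ : Θ)
    (f : Θ → ℕ → (Fin d → ℝ) → ℝ)
    (hf_meas : ∀ θ k, Measurable (f θ k))
    (hf_pos : ∀ θ k ω, 0 < f θ k ω)
    (hlog_int : ∀ θ k, Integrable (fun ω => Real.log (f θ k ω)) (normCube d))
    (hlog_zero : ∀ θ k, ∫ ω, Real.log (f θ k ω) ∂(normCube d) = 0)
    (hratio_int : ∀ θ k, Integrable (fun ω => f θ₀ k ω / f θ k ω) (normCube d))
    (hident : ∀ θ, θ ≠ θ₀ → ∃ k, 0 < normCube d {ω | f θ k ω ≠ f θ₀ k ω})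
    (W : Θ → ℝ≥0∞)
    (hW : ∀ θ, W θ = ⨆ k : ℕ, ENNReal.ofReal (∫ ω, f θ₀ k ω / f θ k ω ∂(normCube d))) :
    W θ₀ = 1 ∧ (∀ θ, θ ≠ θ₀ → 1 < W θ) ∧
      (⨅ θ, W θ) = 1 ∧ (∀ θ, W θ = 1 → θ = θ₀) := by
  have : IsProbabilityMeasure (normCube d) := normCube_isProb d
  -- W θ₀ = 1
  have hW0 : W θ₀ = 1 := by
    rw [hW]
    have : ∀ k : ℕ, (∫ ω, f θ₀ k ω / f θ₀ k ω ∂(normCube d)) = 1 := by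
      intro k
      have : (fun ω => f θ₀ k ω / f θ₀ k ω) = fun _ => (1 : ℝ) := by
        funext ω; exact div_self (hf_pos θ₀ k ω).ne'
      rw [this]; simp
    simp [this]
  -- strict inequality for θ ≠ θ₀
  have hWgt : ∀ θ, θ ≠ θ₀ → 1 < W θ := by
    intro θ hθ
    obtain ⟨k, hk⟩ := hident θ hθ
    set g : (Fin d → ℝ) → ℝ := fun ω => f θ₀ k ω / f θ k ω with hg
    have hgpos : ∀ ω, 0 < g ω := fun ω => div_pos (hf_pos θ₀ k ω) (hf_pos θ k ω)
    have hlg : ∀ ω, Real.log (g ω) = Real.log (f θ₀ k ω) - Real.log (f θ k ω) := by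
      intro ω; exact Real.log_div (hf_pos θ₀ k ω).ne' (hf_pos θ k ω).ne'
    have hli : Integrable (fun ω => Real.log (g ω)) (normCube d) := by
      simp only [hlg]; exact (hlog_int θ₀ k).sub (hlog_int θ k)
    have hlz : ∫ ω, Real.log (g ω) ∂(normCube d) = 0 := by
      simp only [hlg]
      rw [integral_sub (hlog_int θ₀ k) (hlog_int θ k), hlog_zero, hlog_zero, sub_zero]
    have hset : {ω | g ω ≠ 1} = {ω | f θ k ω ≠ f θ₀ k ω} := by
      ext ω
      simp only [Set.mem_setOf_eq, hg, not_iff_not]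
      rw [div_eq_one_iff_eq (hf_pos θ k ω).ne', eq_comm]
    have hj := jensen_key (normCube d) g hgpos (hratio_int θ k) hli hlz
    have hgt : 1 < ∫ ω, g ω ∂(normCube d) := hj.2 (by rw [hset]; exact hk)
    calc (1 : ℝ≥0∞) < ENNReal.ofReal (∫ ω, g ω ∂(normCube d)) := by
          rw [show (1 : ℝ≥0∞) = ENNReal.ofReal 1 by simp]
          exact (ENNReal.ofReal_lt_ofReal_iff (by linarith)).2 hgt
      _ ≤ W θ := by
          rw [hW]
          exact le_iSup (fun k : ℕ => ENNReal.ofReal (∫ ω, f θ₀ k ω / f θ k ω ∂(normCube d))) k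
  refine ⟨hW0, hWgt, ?_, ?_⟩
  · apply le_antisymm
    · exact (iInf_le _ θ₀).trans hW0.le
    · refine le_iInf fun θ => ?_
      by_cases h : θ = θ₀
      · rw [h, hW0]
      · exact (hWgt θ h).le
  · intro θ hθ1
    by_contra h
    exact absurd hθ1 (hWgt θ h).ne'
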